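/- arXiv:1806.01457 — 3 statements merged into one kernel-verified Lean document; each statement's English description precedes it below -/
import Mathlib

section
/- Let Y₀, Y₁ be integrable random variables, Z a {0,1}-valued random variable, and D₀, D₁ be {0,1}-valued random variables such that the pair (Y₀, Y₁, D₀, D₁) is independent of Z and D₁ ≥ D₀ almost surely (monotonicity). Define D = Z·D₁ + (1−Z)·D₀ and Y = D·Y₁ + (1−D)·Y₀. If 0 < P(Z = 1) < 1 and P(D₁ > D₀) > 0, then (E[Y | Z = 1] − E[Y | Z = 0]) / (E[D | Z = 1] − E[D | Z = 0]) = E[Y₁ − Y₀ | D₁ > D₀]. -/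
open MeasureTheory ProbabilityTheory

lemma late_helper
    {Ω : Type*} [MeasurableSpace Ω] (μ : Measure Ω) [IsProbabilityMeasure μ]
    (W Z : Ω → ℝ) (hW : Integrable W μ) (hZ : Measurable Z)
    (hind : IndepFun W Z μ) (c : ℝ) :
    ∫ ω in {ω | Z ω = c}, W ω ∂μ = (∫ ω, W ω ∂μ) * (μ {ω | Z ω = c}).toReal := by
  set g : ℝ → ℝ := fun z => if z = c then 1 else 0 with hg
  have hgmeas : Measurable g := by
    apply Measurable.ite (measurableSet_eq) measurable_const measurable_const
  have hind2 : IndepFun W (g ∘ Z) μ := hind.comp measurable_id hgmeas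
  have hs : MeasurableSet {ω | Z ω = c} := hZ (measurableSet_eq)
  have hgZ : Integrable (g ∘ Z) μ := by
    refine (integrable_const (μ := μ) (1:ℝ)).bdd_mul ((hgmeas.comp hZ).aestronglyMeasurable) (c := 1) (Filter.Eventually.of_forall ?_)
      |>.congr ?_
    · intro x
      simp only [Function.comp, g]
      split <;> simp
    · filter_upwards with x; simp
  have key : ∫ ω, W ω * (g ∘ Z) ω ∂μ = (∫ ω, W ω ∂μ) * ∫ ω, (g ∘ Z) ω ∂μ :=
    hind2.integral_fun_mul_eq_mul_integral hW.aestronglyMeasurable hgZ.aestronglyMeasurable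
  have h1 : ∫ ω, W ω * (g ∘ Z) ω ∂μ = ∫ ω in {ω | Z ω = c}, W ω ∂μ := by
    rw [← integral_indicator hs]
    congr 1
    ext ω
    by_cases h : Z ω = c <;> simp [Set.indicator, g, Function.comp, h]
  have h2 : ∫ ω, (g ∘ Z) ω ∂μ = (μ {ω | Z ω = c}).toReal := by
    have : (g ∘ Z) = Set.indicator {ω | Z ω = c} (fun _ => (1:ℝ)) := by
      ext ω
      by_cases h : Z ω = c <;> simp [Set.indicator, g, Function.comp, h]
    rw [this, integral_indicator hs]
    simp
    rfl
  rw [← h1, key, h2]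

theorem late_theorem
    {Ω : Type*} [MeasurableSpace Ω] (μ : Measure Ω) [IsProbabilityMeasure μ]
    (Y0 Y1 D0 D1 Z D Y : Ω → ℝ)
    (hZmeas : Measurable Z) (hD0meas : Measurable D0) (hD1meas : Measurable D1)
    (hZ01 : ∀ ω, Z ω = 0 ∨ Z ω = 1)
    (hD0bin : ∀ ω, D0 ω = 0 ∨ D0 ω = 1) (hD1bin : ∀ ω, D1 ω = 0 ∨ D1 ω = 1)
    (hY0 : Integrable Y0 μ) (hY1 : Integrable Y1 μ)
    (hindep : IndepFun (fun ω => (Y0 ω, Y1 ω, D0 ω, D1 ω)) Z μ)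
    (hmono : ∀ᵐ ω ∂μ, D0 ω ≤ D1 ω)
    (hDdef : ∀ ω, D ω = Z ω * D1 ω + (1 - Z ω) * D0 ω)
    (hYdef : ∀ ω, Y ω = D ω * Y1 ω + (1 - D ω) * Y0 ω)
    (h1 : 0 < μ {ω | Z ω = 1}) (h2 : μ {ω | Z ω = 1} < 1)
    (hcompl : 0 < μ {ω | D0 ω < D1 ω}) :
    ((∫ ω in {ω | Z ω = 1}, Y ω ∂μ) / (μ {ω | Z ω = 1}).toReal
      - (∫ ω in {ω | Z ω = 0}, Y ω ∂μ) / (μ {ω | Z ω = 0}).toReal)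
    / ((∫ ω in {ω | Z ω = 1}, D ω ∂μ) / (μ {ω | Z ω = 1}).toReal
      - (∫ ω in {ω | Z ω = 0}, D ω ∂μ) / (μ {ω | Z ω = 0}).toReal)
    = (∫ ω in {ω | D0 ω < D1 ω}, (Y1 ω - Y0 ω) ∂μ) / (μ {ω | D0 ω < D1 ω}).toReal := by
  -- notation
  set A := {ω | Z ω = 1} with hA
  set B := {ω | Z ω = 0} with hB
  set S := {ω | D0 ω < D1 ω} with hS
  have hSmeas : MeasurableSet S := measurableSet_lt hD0meas hD1meas
  have hAmeas : MeasurableSet A := hZmeas (measurableSet_eq)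
  -- B = Aᶜ
  have hBA : B = Aᶜ := by
    ext ω
    rcases hZ01 ω with h | h <;> simp [hA, hB, h]
  have hμB : μ B = 1 - μ A := by
    rw [hBA, measure_compl hAmeas (measure_ne_top μ A)]
    simp
  set p := (μ A).toReal with hp
  set q := (μ B).toReal with hq
  have hpne : p ≠ 0 := by
    simp only [hp, ENNReal.toReal_ne_zero]
    exact ⟨h1.ne', measure_ne_top μ A⟩
  have hqne : q ≠ 0 := by
    have : μ B ≠ 0 := by
      rw [hμB]
      simp only [ne_eq, tsub_eq_zero_iff_le, not_le]
      exact h2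
    simp only [hq, ENNReal.toReal_ne_zero]
    exact ⟨this, measure_ne_top μ B⟩
  -- auxiliary functions: W1 = D1*Y1+(1-D1)*Y0, W0 = D0*Y1+(1-D0)*Y0
  set W1 : Ω → ℝ := fun ω => D1 ω * Y1 ω + (1 - D1 ω) * Y0 ω with hW1
  set W0 : Ω → ℝ := fun ω => D0 ω * Y1 ω + (1 - D0 ω) * Y0 ω with hW0
  -- integrability
  have hbd : ∀ (f : Ω → ℝ), (∀ ω, f ω = 0 ∨ f ω = 1) → ∃ C, ∀ x, ‖f x‖ ≤ C := by
    intro f hf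
    refine ⟨1, fun x => ?_⟩
    rcases hf x with h | h <;> simp [h]
  have hbd' : ∀ (f : Ω → ℝ), (∀ ω, f ω = 0 ∨ f ω = 1) → ∃ C, ∀ x, ‖1 - f x‖ ≤ C := by
    intro f hf
    refine ⟨1, fun x => ?_⟩
    rcases hf x with h | h <;> simp [h]
  have hintW1 : Integrable W1 μ :=
    (hY1.bdd_mul hD1meas.aestronglyMeasurable (Filter.Eventually.of_forall (hbd D1 hD1bin).choose_spec)).add
      (hY0.bdd_mul ((measurable_const.sub hD1meas).aestronglyMeasurable) (Filter.Eventually.of_forall (hbd' D1 hD1bin).choose_spec))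
  have hintW0 : Integrable W0 μ :=
    (hY1.bdd_mul hD0meas.aestronglyMeasurable (Filter.Eventually.of_forall (hbd D0 hD0bin).choose_spec)).add
      (hY0.bdd_mul ((measurable_const.sub hD0meas).aestronglyMeasurable) (Filter.Eventually.of_forall (hbd' D0 hD0bin).choose_spec))
  have hintD1 : Integrable D1 μ := by
    have := (integrable_const (μ := μ) (1:ℝ)).bdd_mul hD1meas.aestronglyMeasurable (Filter.Eventually.of_forall (hbd D1 hD1bin).choose_spec)
    simpa using this
  have hintD0 : Integrable D0 μ := by
    have := (integrable_const (μ := μ) (1:ℝ)).bdd_mul hD0meas.aestronglyMeasurable (Filter.Eventually.of_forall (hbd D0 hD0bin).choose_spec)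
    simpa using this
  -- independence of composed functions with Z
  have hcomp : ∀ (g : ℝ × ℝ × ℝ × ℝ → ℝ), Measurable g →
      IndepFun (fun ω => g (Y0 ω, Y1 ω, D0 ω, D1 ω)) Z μ := by
    intro g hg
    exact hindep.comp hg measurable_id
  have hindW1 : IndepFun W1 Z μ := by
    have := hcomp (fun x => x.2.2.2 * x.2.1 + (1 - x.2.2.2) * x.1)
      (by fun_prop)
    exact this
  have hindW0 : IndepFun W0 Z μ := by
    have := hcomp (fun x => x.2.2.1 * x.2.1 + (1 - x.2.2.1) * x.1)
      (by fun_prop)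
    exact this
  have hindD1 : IndepFun D1 Z μ := hcomp (fun x => x.2.2.2) (by fun_prop)
  have hindD0 : IndepFun D0 Z μ := hcomp (fun x => x.2.2.1) (by fun_prop)
  -- Y and D agree with W1/D1 on A, W0/D0 on B
  have hYA : ∀ ω ∈ A, Y ω = W1 ω := by
    intro ω hω
    simp only [hA, Set.mem_setOf_eq] at hω
    have hD : D ω = D1 ω := by rw [hDdef, hω]; ring
    rw [hYdef, hD, hW1]
  have hYB : ∀ ω ∈ B, Y ω = W0 ω := by
    intro ω hω
    simp only [hB, Set.mem_setOf_eq] at hω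
    have hD : D ω = D0 ω := by rw [hDdef, hω]; ring
    rw [hYdef, hD, hW0]
  have hDA : ∀ ω ∈ A, D ω = D1 ω := by
    intro ω hω
    simp only [hA, Set.mem_setOf_eq] at hω
    rw [hDdef, hω]; ring
  have hDB : ∀ ω ∈ B, D ω = D0 ω := by
    intro ω hω
    simp only [hB, Set.mem_setOf_eq] at hω
    rw [hDdef, hω]; ring
  have hBmeas : MeasurableSet B := by rw [hBA]; exact hAmeas.compl
  -- compute the four set integrals
  have e1 : ∫ ω in A, Y ω ∂μ = (∫ ω, W1 ω ∂μ) * p := by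
    rw [setIntegral_congr_fun hAmeas hYA]
    exact late_helper μ W1 Z hintW1 hZmeas hindW1 1
  have e2 : ∫ ω in B, Y ω ∂μ = (∫ ω, W0 ω ∂μ) * q := by
    rw [setIntegral_congr_fun hBmeas hYB]
    exact late_helper μ W0 Z hintW0 hZmeas hindW0 0
  have e3 : ∫ ω in A, D ω ∂μ = (∫ ω, D1 ω ∂μ) * p := by
    rw [setIntegral_congr_fun hAmeas hDA]
    exact late_helper μ D1 Z hintD1 hZmeas hindD1 1
  have e4 : ∫ ω in B, D ω ∂μ = (∫ ω, D0 ω ∂μ) * q := by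
    rw [setIntegral_congr_fun hBmeas hDB]
    exact late_helper μ D0 Z hintD0 hZmeas hindD0 0
  -- difference of means equals complier integrals
  have hnum : (∫ ω, W1 ω ∂μ) - (∫ ω, W0 ω ∂μ) = ∫ ω in S, (Y1 ω - Y0 ω) ∂μ := by
    rw [← integral_sub hintW1 hintW0, ← integral_indicator hSmeas]
    apply integral_congr_ae
    filter_upwards [hmono] with ω hω
    rcases hD0bin ω with h0 | h0 <;> rcases hD1bin ω with h1 | h1
    · simp [hW1, hW0, Set.indicator, hS, h0, h1]
    · simp [hW1, hW0, Set.indicator, hS, h0, h1]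
    · exfalso; rw [h0, h1] at hω; linarith
    · simp [hW1, hW0, Set.indicator, hS, h0, h1]
  have hden : (∫ ω, D1 ω ∂μ) - (∫ ω, D0 ω ∂μ) = (μ S).toReal := by
    rw [← integral_sub hintD1 hintD0]
    have : ∫ ω, (D1 ω - D0 ω) ∂μ = ∫ ω, Set.indicator S (fun _ => (1:ℝ)) ω ∂μ := by
      apply integral_congr_ae
      filter_upwards [hmono] with ω hω
      rcases hD0bin ω with h0 | h0 <;> rcases hD1bin ω with h1 | h1
      · simp [Set.indicator, hS, h0, h1]
      · simp [Set.indicator, hS, h0, h1]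
      · exfalso; rw [h0, h1] at hω; linarith
      · simp [Set.indicator, hS, h0, h1]
    rw [this, integral_indicator hSmeas]
    simp
    rfl
  have hSne : (μ S).toReal ≠ 0 := by
    simp only [ENNReal.toReal_ne_zero]
    exact ⟨hcompl.ne', measure_ne_top μ S⟩
  rw [e1, e2, e3, e4, mul_div_assoc, mul_div_assoc, mul_div_assoc, mul_div_assoc,
    div_self hpne, div_self hqne, mul_one, mul_one, mul_one, mul_one, hnum, hden]
end

section
/- Under the assumptions of the LATE theorem (independence of (Y₀,Y₁,D₀,D₁) from binary Z, monotonicity D₁ ≥ D₀ a.s., D = Z·D₁+(1−Z)·D₀), E[D | Z = 1] − E[D | Z = 0] = P(D₁ > D₀), i.e., the first-stage effect equals the proportion of compliers. -/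
open MeasureTheory ProbabilityTheory

private lemma setIntegral_binary {Ω : Type*} [MeasurableSpace Ω] (μ : Measure Ω)
    (f : Ω → ℝ) (hf : Measurable f) (hbin : ∀ ω, f ω = 0 ∨ f ω = 1)
    {A : Set Ω} (hA : MeasurableSet A) :
    ∫ ω in A, f ω ∂μ = (μ (A ∩ {ω | f ω = 1})).toReal := by
  have hset : MeasurableSet {ω | f ω = 1} := hf (measurableSet_singleton 1)
  have : ∫ ω in A, f ω ∂μ = ∫ ω in A, Set.indicator {ω | f ω = 1} (fun _ => (1:ℝ)) ω ∂μ := by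
    refine setIntegral_congr_fun hA fun ω _ => ?_
    rcases hbin ω with h | h <;> simp [Set.indicator, h]
  rw [this, setIntegral_indicator hset, setIntegral_const, smul_eq_mul, mul_one]
  rfl

theorem first_stage_eq_complier_share
    {Ω : Type*} [MeasurableSpace Ω] (μ : Measure Ω) [IsProbabilityMeasure μ]
    (Y0 Y1 D0 D1 Z D : Ω → ℝ)
    (hZmeas : Measurable Z) (hD0meas : Measurable D0) (hD1meas : Measurable D1)
    (hZ01 : ∀ ω, Z ω = 0 ∨ Z ω = 1)
    (hD0bin : ∀ ω, D0 ω = 0 ∨ D0 ω = 1) (hD1bin : ∀ ω, D1 ω = 0 ∨ D1 ω = 1)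
    (hindep : IndepFun (fun ω => (Y0 ω, Y1 ω, D0 ω, D1 ω)) Z μ)
    (hmono : ∀ᵐ ω ∂μ, D0 ω ≤ D1 ω)
    (hDdef : ∀ ω, D ω = Z ω * D1 ω + (1 - Z ω) * D0 ω)
    (h1 : 0 < μ {ω | Z ω = 1}) (h2 : μ {ω | Z ω = 1} < 1) :
    (∫ ω in {ω | Z ω = 1}, D ω ∂μ) / (μ {ω | Z ω = 1}).toReal
      - (∫ ω in {ω | Z ω = 0}, D ω ∂μ) / (μ {ω | Z ω = 0}).toReal
    = (μ {ω | D0 ω < D1 ω}).toReal := by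
  have hA1 : MeasurableSet {ω | Z ω = 1} := hZmeas (measurableSet_singleton 1)
  have hA0 : MeasurableSet {ω | Z ω = 0} := hZmeas (measurableSet_singleton 0)
  have hS1 : MeasurableSet {ω | D1 ω = 1} := hD1meas (measurableSet_singleton 1)
  have hS0 : MeasurableSet {ω | D0 ω = 1} := hD0meas (measurableSet_singleton 1)
  -- independence of D1 and Z, D0 and Z
  have hD1Z : IndepFun D1 Z μ :=
    hindep.comp (measurable_snd.comp (measurable_snd.comp measurable_snd)) measurable_id
  have hD0Z : IndepFun D0 Z μ :=
    hindep.comp (measurable_fst.comp (measurable_snd.comp measurable_snd)) measurable_id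
  -- integrals over {Z=1}, {Z=0}
  have e1 : ∫ ω in {ω | Z ω = 1}, D ω ∂μ = ∫ ω in {ω | Z ω = 1}, D1 ω ∂μ := by
    refine setIntegral_congr_fun hA1 fun ω hω => ?_
    simp only [Set.mem_setOf_eq] at hω
    rw [hDdef, hω]; ring
  have e0 : ∫ ω in {ω | Z ω = 0}, D ω ∂μ = ∫ ω in {ω | Z ω = 0}, D0 ω ∂μ := by
    refine setIntegral_congr_fun hA0 fun ω hω => ?_
    simp only [Set.mem_setOf_eq] at hω
    rw [hDdef, hω]; ring
  have i1 : μ ({ω | Z ω = 1} ∩ {ω | D1 ω = 1}) = μ {ω | D1 ω = 1} * μ {ω | Z ω = 1} := by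
    rw [Set.inter_comm]
    exact hD1Z.measure_inter_preimage_eq_mul {1} {1}
      (measurableSet_singleton 1) (measurableSet_singleton 1)
  have i0 : μ ({ω | Z ω = 0} ∩ {ω | D0 ω = 1}) = μ {ω | D0 ω = 1} * μ {ω | Z ω = 0} := by
    rw [Set.inter_comm]
    exact hD0Z.measure_inter_preimage_eq_mul {1} {0}
      (measurableSet_singleton 1) (measurableSet_singleton 0)
  have hZ1ne : (μ {ω | Z ω = 1}).toReal ≠ 0 :=
    (ENNReal.toReal_pos h1.ne' (measure_ne_top _ _)).ne'
  have hZ0eq : {ω | Z ω = 0} = {ω | Z ω = 1}ᶜ := by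
    ext ω; rcases hZ01 ω with h | h <;> simp [h]
  have hZ0pos : 0 < μ {ω | Z ω = 0} := by
    rw [hZ0eq, measure_compl hA1 (measure_ne_top _ _), measure_univ]
    exact tsub_pos_of_lt h2
  have hZ0ne : (μ {ω | Z ω = 0}).toReal ≠ 0 :=
    (ENNReal.toReal_pos hZ0pos.ne' (measure_ne_top _ _)).ne'
  have t1 : (∫ ω in {ω | Z ω = 1}, D ω ∂μ) / (μ {ω | Z ω = 1}).toReal
      = (μ {ω | D1 ω = 1}).toReal := by
    rw [e1, setIntegral_binary μ D1 hD1meas hD1bin hA1, i1, ENNReal.toReal_mul,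
      mul_div_assoc, div_self hZ1ne, mul_one]
  have t0 : (∫ ω in {ω | Z ω = 0}, D ω ∂μ) / (μ {ω | Z ω = 0}).toReal
      = (μ {ω | D0 ω = 1}).toReal := by
    rw [e0, setIntegral_binary μ D0 hD0meas hD0bin hA0, i0, ENNReal.toReal_mul,
      mul_div_assoc, div_self hZ0ne, mul_one]
  rw [t1, t0]
  -- complier set
  have hC : {ω | D0 ω < D1 ω} = {ω | D1 ω = 1} \ {ω | D0 ω = 1} := by
    ext ω
    rcases hD0bin ω with h0 | h0 <;> rcases hD1bin ω with h1' | h1' <;>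
      simp [h0, h1']
  have hbad : μ ({ω | D0 ω = 1} \ {ω | D1 ω = 1}) = 0 := by
    refine measure_mono_null ?_ (ae_iff.mp hmono)
    intro ω hω
    rcases hD1bin ω with h | h
    · simp only [Set.mem_diff, Set.mem_setOf_eq] at hω
      simp only [Set.mem_setOf_eq, not_le, hω.1, h]; norm_num
    · exact absurd h hω.2
  have hkey : μ {ω | D1 ω = 1} = μ {ω | D0 ω = 1} + μ ({ω | D1 ω = 1} \ {ω | D0 ω = 1}) := by
    have h2' : μ ({ω | D1 ω = 1} ∩ {ω | D0 ω = 1}) = μ {ω | D0 ω = 1} := by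
      have := measure_inter_add_diff {ω | D0 ω = 1} hS1 (μ := μ)
      rw [hbad, add_zero] at this
      rw [Set.inter_comm, this]
    rw [← h2', measure_inter_add_diff _ hS0]
  rw [hC, hkey, ENNReal.toReal_add (measure_ne_top _ _) (measure_ne_top _ _)]
  ring
end

section
/- Under the assumptions of the LATE theorem (independence, monotonicity, D = Z·D₁+(1−Z)·D₀, Y = D·Y₁+(1−D)·Y₀, binary Z with 0 < P(Z=1) < 1), E[Y | Z = 1] − E[Y | Z = 0] = E[(Y₁ − Y₀) · 1{D₁ > D₀}]. -/
open MeasureTheory ProbabilityTheory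

theorem reduced_form_loads_on_compliers
    {Ω : Type*} [MeasurableSpace Ω] (μ : Measure Ω) [IsProbabilityMeasure μ]
    (Y0 Y1 D0 D1 Z D Y : Ω → ℝ)
    (hZmeas : Measurable Z) (hD0meas : Measurable D0) (hD1meas : Measurable D1)
    (hZ01 : ∀ ω, Z ω = 0 ∨ Z ω = 1)
    (hD0bin : ∀ ω, D0 ω = 0 ∨ D0 ω = 1) (hD1bin : ∀ ω, D1 ω = 0 ∨ D1 ω = 1)
    (hY0 : Integrable Y0 μ) (hY1 : Integrable Y1 μ)
    (hindep : IndepFun (fun ω => (Y0 ω, Y1 ω, D0 ω, D1 ω)) Z μ)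
    (hmono : ∀ᵐ ω ∂μ, D0 ω ≤ D1 ω)
    (hDdef : ∀ ω, D ω = Z ω * D1 ω + (1 - Z ω) * D0 ω)
    (hYdef : ∀ ω, Y ω = D ω * Y1 ω + (1 - D ω) * Y0 ω)
    (h1 : 0 < μ {ω | Z ω = 1}) (h2 : μ {ω | Z ω = 1} < 1) :
    (∫ ω in {ω | Z ω = 1}, Y ω ∂μ) / (μ {ω | Z ω = 1}).toReal
      - (∫ ω in {ω | Z ω = 0}, Y ω ∂μ) / (μ {ω | Z ω = 0}).toReal
    = ∫ ω, (Y1 ω - Y0 ω) * Set.indicator {ω | D0 ω < D1 ω} 1 ω ∂μ := by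
  set W1 : Ω → ℝ := fun ω => D1 ω * Y1 ω + (1 - D1 ω) * Y0 ω with hW1
  set W0 : Ω → ℝ := fun ω => D0 ω * Y1 ω + (1 - D0 ω) * Y0 ω with hW0
  have hbd : ∀ (f : Ω → ℝ), (∀ ω, f ω = 0 ∨ f ω = 1) → ∀ x, ‖f x‖ ≤ 1 := by
    intro f hf x; rcases hf x with h | h <;> simp [h]
  have hbd' : ∀ (f : Ω → ℝ), (∀ ω, f ω = 0 ∨ f ω = 1) → ∀ x, ‖1 - f x‖ ≤ 1 := by
    intro f hf x; rcases hf x with h | h <;> simp [h]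
  have hiW1 : Integrable W1 μ :=
    (hY1.bdd_mul hD1meas.aestronglyMeasurable (ae_of_all μ (hbd D1 hD1bin))).add
      (hY0.bdd_mul ((measurable_const.sub hD1meas).aestronglyMeasurable) (ae_of_all μ (hbd' D1 hD1bin)))
  have hiW0 : Integrable W0 μ :=
    (hY1.bdd_mul hD0meas.aestronglyMeasurable (ae_of_all μ (hbd D0 hD0bin))).add
      (hY0.bdd_mul ((measurable_const.sub hD0meas).aestronglyMeasurable) (ae_of_all μ (hbd' D0 hD0bin)))
  have hmW1 : AEStronglyMeasurable W1 μ := hiW1.1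
  have hmW0 : AEStronglyMeasurable W0 μ := hiW0.1
  -- key identity via independence
  have key : ∀ (c : ℝ) (g : ℝ × ℝ × ℝ × ℝ → ℝ) (W : Ω → ℝ), Measurable g →
      (W = fun ω => g (Y0 ω, Y1 ω, D0 ω, D1 ω)) → AEStronglyMeasurable W μ →
      ∫ ω in {ω | Z ω = c}, W ω ∂μ = (∫ ω, W ω ∂μ) * (μ {ω | Z ω = c}).toReal := by
    intro c g W hg hWg hWm
    have hms : MeasurableSet {ω | Z ω = c} := hZmeas (measurableSet_singleton c)
    set ψ : ℝ → ℝ := Set.indicator {c} 1 with hψ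
    have hψm : Measurable ψ := measurable_one.indicator (measurableSet_singleton c)
    have hcomp : (fun ω => ψ (Z ω)) = Set.indicator {ω | Z ω = c} 1 := by
      ext ω
      by_cases h : Z ω = c
      · simp [hψ, h, Set.indicator_of_mem, Set.mem_setOf_eq]
      · simp [hψ, h, Set.indicator_of_notMem, Set.mem_setOf_eq]
    have hind : IndepFun W (fun ω => ψ (Z ω)) μ := by
      rw [hWg]
      exact hindep.comp hg hψm
    have hψZm : AEStronglyMeasurable (fun ω => ψ (Z ω)) μ := by
      rw [hcomp]; exact (measurable_one.indicator hms).aestronglyMeasurable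
    have hmul := hind.integral_fun_mul_eq_mul_integral hWm hψZm
    calc ∫ ω in {ω | Z ω = c}, W ω ∂μ
        = ∫ ω, W ω * ψ (Z ω) ∂μ := by
          rw [← integral_indicator hms]
          congr 1
          ext ω
          by_cases h : ω ∈ {ω | Z ω = c}
          · simp [hψ, Set.indicator_of_mem h, Set.indicator_of_mem, h.out]
          · have : Z ω ≠ c := h
            simp [hψ, Set.indicator_of_notMem h, this]
      _ = (∫ ω, W ω ∂μ) * ∫ ω, ψ (Z ω) ∂μ := hmul
      _ = (∫ ω, W ω ∂μ) * (μ {ω | Z ω = c}).toReal := by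
          rw [hcomp, integral_indicator_one hms, measureReal_def]
  have hms1 : MeasurableSet {ω | Z ω = 1} := hZmeas (measurableSet_singleton 1)
  have hms0 : MeasurableSet {ω | Z ω = 0} := hZmeas (measurableSet_singleton 0)
  -- Y agrees with W1 on {Z=1} and with W0 on {Z=0}
  have hY1eq : ∫ ω in {ω | Z ω = 1}, Y ω ∂μ = ∫ ω in {ω | Z ω = 1}, W1 ω ∂μ := by
    refine setIntegral_congr_fun hms1 fun ω hω => ?_
    have hz : Z ω = 1 := hω
    simp [hYdef, hDdef, hz, hW1]
  have hY0eq : ∫ ω in {ω | Z ω = 0}, Y ω ∂μ = ∫ ω in {ω | Z ω = 0}, W0 ω ∂μ := by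
    refine setIntegral_congr_fun hms0 fun ω hω => ?_
    have hz : Z ω = 0 := hω
    simp [hYdef, hDdef, hz, hW0]
  have k1 := key 1 (fun p => p.2.2.2 * p.2.1 + (1 - p.2.2.2) * p.1) W1 (by fun_prop) rfl hmW1
  have k0 := key 0 (fun p => p.2.2.1 * p.2.1 + (1 - p.2.2.1) * p.1) W0 (by fun_prop) rfl hmW0
  -- measures are nonzero
  have hμ1 : (μ {ω | Z ω = 1}).toReal ≠ 0 := by
    have := h1.ne'
    have hfin : μ {ω | Z ω = 1} ≠ ⊤ := (measure_lt_top μ _).ne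
    simp [ENNReal.toReal_eq_zero_iff, this, hfin]
  have hμ0 : (μ {ω | Z ω = 0}).toReal ≠ 0 := by
    have hc : {ω | Z ω = 0} = {ω | Z ω = 1}ᶜ := by
      ext ω; rcases hZ01 ω with h | h <;> simp [h]
    have hpos : 0 < μ {ω | Z ω = 0} := by
      rw [hc, measure_compl hms1 (measure_ne_top μ _), measure_univ]
      exact tsub_pos_of_lt h2
    have hfin : μ {ω | Z ω = 0} ≠ ⊤ := (measure_lt_top μ _).ne
    simp [ENNReal.toReal_eq_zero_iff, hpos.ne', hfin]
  rw [hY1eq, hY0eq, k1, k0, mul_div_assoc, mul_div_assoc, div_self hμ1, div_self hμ0,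
    mul_one, mul_one, ← integral_sub hiW1 hiW0]
  refine integral_congr_ae ?_
  filter_upwards [hmono] with ω hle
  rcases hD0bin ω with h0 | h0 <;> rcases hD1bin ω with h1' | h1'
  · have : ¬ D0 ω < D1 ω := by rw [h0, h1']; norm_num
    simp [hW1, hW0, h0, h1', Set.indicator_of_notMem this]
  · have : D0 ω < D1 ω := by rw [h0, h1']; norm_num
    simp [hW1, hW0, h0, h1', Set.indicator_of_mem this]
  · exfalso; rw [h0, h1'] at hle; linarith
  · have : ¬ D0 ω < D1 ω := by rw [h0, h1']; norm_num
    simp [hW1, hW0, h0, h1', Set.indicator_of_notMem this]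
end
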